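/- Let n > 3 be a squarefree positive integer with n ≡ 1 (mod 4). Then n is prime if and only if the number of pairs (x, y) ∈ ℕ × ℕ with n = 4x² + y² is odd (this set of pairs is finite). -/

import Mathlib

set_option maxHeartbeats 1000000


lemma even_card_of_invol {α : Type*} [DecidableEq α] (f : α → α) (s : Finset α)
    (h : ∀ a ∈ s, f a ∈ s ∧ f (f a) = a ∧ f a ≠ a) : Even s.card := by
  induction s using Finset.strongInduction with
  | _ s ih =>
    rcases s.eq_empty_or_nonempty with rfl | ⟨a, ha⟩
    · simp
    · obtain ⟨hfa, hffa, hne⟩ := h a ha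
      have h2 : ({a, f a} : Finset α) ⊆ s := by
        intro x hx; simp at hx; rcases hx with rfl | rfl <;> assumption
      have hsub : s \ {a, f a} ⊂ s := by
        apply Finset.sdiff_ssubset h2 (by simp)
      have heven := ih _ hsub (by
        intro b hb
        simp only [Finset.mem_sdiff, Finset.mem_insert, Finset.mem_singleton] at hb ⊢
        push_neg at hb ⊢
        obtain ⟨hbs, hbn⟩ := hb
        obtain ⟨h1, h2', h3⟩ := h b hbs
        refine ⟨⟨h1, ?_, ?_⟩, h2', h3⟩
        · rintro rfl; exact hbn.2 h2'.symm
        · intro hfb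
          have : b = a := by
            have := congrArg f hfb
            rwa [h2', hffa] at this
          exact hbn.1 this)
      have hcard : (s \ {a, f a}).card + ({a, f a} : Finset α).card = s.card :=
        Finset.card_sdiff_add_card_eq_card h2
      have hc2 : ({a, f a} : Finset α).card = 2 := by
        rw [Finset.card_insert_of_notMem (by simpa using hne.symm), Finset.card_singleton]
      obtain ⟨k, hk⟩ := heven
      exact ⟨k + 1, by omega⟩



lemma rep_inj {n a b a' b' : ℤ} (hn : 0 < n)
    (h1 : a ^ 2 + b ^ 2 = n) (h2 : a' ^ 2 + b' ^ 2 = n)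
    (ha : a % 2 = 0) (ha' : a' % 2 = 0) (hb : b % 2 = 1) (hb' : b' % 2 = 1)
    (hbpos : 0 < b) (hbpos' : 0 < b')
    (d1 : n ∣ a * b' - a' * b) (d2 : n ∣ a * a' + b * b') :
    a = a' ∧ b = b' := by
  obtain ⟨v, hv⟩ := d1
  obtain ⟨u, hu⟩ := d2
  have key : u ^ 2 + v ^ 2 = 1 := by
    have h : (n * u) ^ 2 + (n * v) ^ 2 = (a ^ 2 + b ^ 2) * (a' ^ 2 + b' ^ 2) := by
      rw [← hu, ← hv]; ring
    rw [h1, h2] at h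
    have hn2 : n ^ 2 ≠ 0 := pow_ne_zero _ hn.ne'
    have h' : n ^ 2 * (u ^ 2 + v ^ 2) = n ^ 2 * 1 := by ring_nf; ring_nf at h; linarith
    exact mul_left_cancel₀ hn2 h'
  have hul : -1 ≤ u := by nlinarith [sq_nonneg (u + 1), sq_nonneg v]
  have hur : u ≤ 1 := by nlinarith [sq_nonneg (u - 1), sq_nonneg v]
  have hvl : -1 ≤ v := by nlinarith [sq_nonneg (v + 1), sq_nonneg u]
  have hvr : v ≤ 1 := by nlinarith [sq_nonneg (v - 1), sq_nonneg u]
  interval_cases u <;> interval_cases v <;> norm_num at key <;> norm_num at hu hv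
  · -- u = -1, v = 0 : contradiction
    exfalso; nlinarith [sq_nonneg (a + a'), mul_pos hbpos hbpos']
  · -- u = 0, v = -1 : a = -b', parity contradiction
    exfalso
    have e : (a + b') ^ 2 + (b - a') ^ 2 = 0 := by nlinarith
    have : a + b' = 0 := by nlinarith [sq_nonneg (a + b'), sq_nonneg (b - a')]
    omega
  · -- u = 0, v = 1 : a = b', parity contradiction
    exfalso
    have e : (a - b') ^ 2 + (b + a') ^ 2 = 0 := by nlinarith
    have : a - b' = 0 := by nlinarith [sq_nonneg (a - b'), sq_nonneg (b + a')]
    omega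
  · -- u = 1, v = 0 : equal
    have e : (a - a') ^ 2 + (b - b') ^ 2 = 0 := by nlinarith
    constructor
    · have : (a - a') ^ 2 = 0 := by nlinarith [sq_nonneg (a - a'), sq_nonneg (b - b')]
      have := pow_eq_zero_iff (n := 2) (by norm_num) |>.mp this
      linarith
    · have : (b - b') ^ 2 = 0 := by nlinarith [sq_nonneg (a - a'), sq_nonneg (b - b')]
      have := pow_eq_zero_iff (n := 2) (by norm_num) |>.mp this
      linarith



lemma exists_rep : ∀ n : ℕ, Squarefree n → n % 2 = 1 → ∀ s : ℤ, (n:ℤ) ∣ s^2 + 1 →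
    ∃ a b : ℤ, a^2 + b^2 = (n:ℤ) ∧ (n:ℤ) ∣ (b - s * a) ∧ a % 2 = 0 ∧ b % 2 = 1 ∧ 0 < b := by
  intro n
  induction n using Nat.strong_induction_on with
  | _ n ih =>
    intro hsf hodd s hdvd
    by_cases h1 : n = 1
    · subst h1
      exact ⟨0, 1, by norm_num, one_dvd _, by norm_num, by norm_num, one_pos⟩
    have hn0 : n ≠ 0 := hsf.ne_zero
    have hn1 : 1 < n := by omega
    set p := n.minFac with hpdef
    have hp : p.Prime := Nat.minFac_prime h1
    obtain ⟨m, hm⟩ : p ∣ n := Nat.minFac_dvd n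
    have hm0 : m ≠ 0 := by rintro rfl; rw [hm] at hn0; simp at hn0
    have hmlt : m < n := by
      have h2 : 2 * m ≤ p * m := Nat.mul_le_mul_right m hp.two_le
      omega
    have hmdvd : m ∣ n := ⟨p, by rw [hm]; ring⟩
    have hmsf : Squarefree m := hsf.squarefree_of_dvd hmdvd
    have hmodd : m % 2 = 1 := by
      rcases Nat.even_or_odd m with he | ho
      · exfalso
        obtain ⟨k, hk⟩ := he
        have h2 : 2 ∣ n := ⟨p * k, by rw [hm, hk]; ring⟩
        omega
      · exact Nat.odd_iff.mp ho
    have hpodd : p % 2 = 1 := by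
      rcases Nat.even_or_odd p with he | ho
      · exfalso; obtain ⟨k, hk⟩ := he
        have h2 : 2 ∣ n := ⟨k * m, by rw [hm, hk]; ring⟩
        omega
      · exact Nat.odd_iff.mp ho
    have hcop : Nat.Coprime p m := by
      rw [Nat.Prime.coprime_iff_not_dvd hp]
      intro hdm
      have : p * p ∣ n := by
        rw [hm]; exact mul_dvd_mul_left p hdm
      have := hsf p this
      rw [Nat.isUnit_iff] at this
      exact hp.one_lt.ne' this
    haveI : Fact p.Prime := ⟨hp⟩
    have hpdvdz : (p:ℤ) ∣ s^2 + 1 :=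
      dvd_trans (Int.natCast_dvd_natCast.mpr ⟨m, hm⟩) hdvd
    have hmdvdz : (m:ℤ) ∣ s^2 + 1 :=
      dvd_trans (Int.natCast_dvd_natCast.mpr hmdvd) hdvd
    have hsq : IsSquare (-1 : ZMod p) := by
      refine ⟨(s : ZMod p), ?_⟩
      have : ((s^2 + 1 : ℤ) : ZMod p) = 0 := by
        rw [ZMod.intCast_zmod_eq_zero_iff_dvd]
        exact_mod_cast hpdvdz
      push_cast at this
      linear_combination -this
    have hp4 : p % 4 ≠ 3 := ZMod.exists_sq_eq_neg_one_iff.mp hsq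
    obtain ⟨A, B, hAB⟩ := Nat.Prime.sq_add_sq (p := p) hp4
    -- arrange parity over ℤ
    obtain ⟨C, D, hCD, hC, hD, hDpos⟩ :
        ∃ C D : ℤ, C^2 + D^2 = (p:ℤ) ∧ C % 2 = 0 ∧ D % 2 = 1 ∧ 0 < D := by
      have hABz : (A:ℤ)^2 + (B:ℤ)^2 = (p:ℤ) := by exact_mod_cast hAB
      have hA2 : (A:ℤ)^2 % 2 = (A:ℤ) % 2 := by
        conv_lhs => rw [sq, Int.mul_emod]
        rcases Int.emod_two_eq_zero_or_one A with h | h <;> rw [h] <;> norm_num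
      have hB2 : (B:ℤ)^2 % 2 = (B:ℤ) % 2 := by
        conv_lhs => rw [sq, Int.mul_emod]
        rcases Int.emod_two_eq_zero_or_one B with h | h <;> rw [h] <;> norm_num
      have hpar : ((A:ℤ) % 2) + ((B:ℤ) % 2) = 1 := by
        have : ((A:ℤ)^2 + (B:ℤ)^2) % 2 = 1 := by
          rw [hABz]
          omega
        rw [Int.add_emod, hA2, hB2] at this
        rcases Int.emod_two_eq_zero_or_one A with h | h <;>
          rcases Int.emod_two_eq_zero_or_one B with h' | h' <;>
            rw [h, h'] at this ⊢ <;> norm_num at this <;> norm_num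
      rcases Int.emod_two_eq_zero_or_one A with h | h
      · have hBodd : (B:ℤ) % 2 = 1 := by omega
        exact ⟨A, B, hABz, h, hBodd, by omega⟩
      · have hBeven : (B:ℤ) % 2 = 0 := by omega
        exact ⟨B, A, by linarith [hABz], hBeven, h, by omega⟩
    -- choose sign so that p divides D - s*C (possibly after negating C)
    have hprod : (p:ℤ) ∣ (D - s*C) * (D + s*C) := by
      have hident : (D - s*C) * (D + s*C) = (p:ℤ) - C^2 * (s^2 + 1) := by
        rw [← hCD]; ring
      rw [hident]
      exact dvd_sub (dvd_refl _) (Dvd.dvd.mul_left hpdvdz _)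
    have hpint : Prime (p:ℤ) := Nat.prime_iff_prime_int.mp hp
    obtain ⟨a₁, b₁, hab1, hd1, ha1, hb1, hb1pos⟩ :
        ∃ a₁ b₁ : ℤ, a₁^2 + b₁^2 = (p:ℤ) ∧ (p:ℤ) ∣ b₁ - s*a₁ ∧ a₁ % 2 = 0 ∧ b₁ % 2 = 1 ∧ 0 < b₁ := by
      rcases hpint.dvd_or_dvd hprod with h | h
      · exact ⟨C, D, hCD, h, hC, hD, hDpos⟩
      · refine ⟨-C, D, by linarith [hCD], ?_, by omega, hD, hDpos⟩
        have : D - s * (-C) = D + s * C := by ring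
        rw [this]; exact h
    obtain ⟨a₂, b₂, hab2, hd2, ha2, hb2, hb2pos⟩ := ih m hmlt hmsf hmodd s hmdvdz
    set A' := a₁*a₂ - b₁*b₂ with hA'def
    set B' := a₁*b₂ + b₁*a₂ with hB'def
    have hABn : A'^2 + B'^2 = (n:ℤ) := by
      have : A'^2 + B'^2 = (a₁^2 + b₁^2) * (a₂^2 + b₂^2) := by rw [hA'def, hB'def]; ring
      rw [this, hab1, hab2, hm]; push_cast; ring
    have hpd : (p:ℤ) ∣ B' - s*A' := by
      have hident : B' - s*A' = a₂*(b₁ - s*a₁) + b₂*((s^2+1)*a₁ + s*(b₁ - s*a₁)) := by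
        rw [hA'def, hB'def]; ring
      rw [hident]
      exact dvd_add (Dvd.dvd.mul_left hd1 _)
        (Dvd.dvd.mul_left (dvd_add (Dvd.dvd.mul_right hpdvdz _) (Dvd.dvd.mul_left hd1 _)) _)
    have hmd : (m:ℤ) ∣ B' - s*A' := by
      have hident : B' - s*A' = a₁*(b₂ - s*a₂) + b₁*((s^2+1)*a₂ + s*(b₂ - s*a₂)) := by
        rw [hA'def, hB'def]; ring
      rw [hident]
      exact dvd_add (Dvd.dvd.mul_left hd2 _)
        (Dvd.dvd.mul_left (dvd_add (Dvd.dvd.mul_right hmdvdz _) (Dvd.dvd.mul_left hd2 _)) _)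
    have hcopz : IsCoprime (p:ℤ) (m:ℤ) := Nat.isCoprime_iff_coprime.mpr hcop
    have hnd : (n:ℤ) ∣ B' - s*A' := by
      rw [hm]; push_cast
      exact IsCoprime.mul_dvd hcopz hpd hmd
    have hA'odd : A' % 2 = 1 := by
      rw [hA'def, Int.sub_emod, Int.mul_emod, Int.mul_emod b₁ b₂, ha1, ha2, hb1, hb2]
      norm_num
    have hB'even : B' % 2 = 0 := by
      rw [hB'def, Int.add_emod, Int.mul_emod, Int.mul_emod b₁ a₂, ha1, ha2, hb1, hb2]
      norm_num
    rcases lt_trichotomy A' 0 with hA | hA | hA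
    · refine ⟨B', -A', by linarith [hABn], ?_, by omega, by omega, by omega⟩
      have hident : -A' - s*B' = -(s*(B' - s*A') + (s^2+1)*A') := by ring
      rw [hident]
      exact dvd_neg.mpr (dvd_add (Dvd.dvd.mul_left hnd _) (Dvd.dvd.mul_right hdvd _))
    · omega
    · refine ⟨-B', A', by linarith [hABn], ?_, by omega, by omega, by omega⟩
      have hident : A' - s*(-B') = s*(B' - s*A') + (s^2+1)*A' := by ring
      rw [hident]
      exact dvd_add (Dvd.dvd.mul_left hnd _) (Dvd.dvd.mul_right hdvd _)

-- card of square roots of -1 in ZMod q for q an odd prime, given one exists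
lemma card_roots_prime {q : ℕ} [NeZero q] (hq : q.Prime) (h2 : q ≠ 2)
    (hex : ∃ r : ZMod q, r ^ 2 = -1) :
    (Finset.univ.filter fun s : ZMod q => s ^ 2 = -1).card = 2 := by
  haveI : Fact q.Prime := ⟨hq⟩
  obtain ⟨r, hr⟩ := hex
  have hr0 : r ≠ 0 := by
    rintro rfl
    simp at hr
  have hrne : r ≠ -r := by
    intro h
    have h2q : (2 : ZMod q) * r = 0 := by linear_combination h
    rcases mul_eq_zero.mp h2q with h' | h'
    · have hz : ((2 : ℕ) : ZMod q) = 0 := by exact_mod_cast h'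
      rw [ZMod.natCast_eq_zero_iff] at hz
      have h2le := Nat.le_of_dvd two_pos hz
      have := hq.two_le
      omega
    · exact hr0 h'
  have : (Finset.univ.filter fun s : ZMod q => s ^ 2 = -1) = {r, -r} := by
    ext t
    simp only [Finset.mem_filter, Finset.mem_univ, true_and, Finset.mem_insert,
      Finset.mem_singleton]
    constructor
    · intro ht
      have h0 : (t - r) * (t + r) = 0 := by linear_combination ht - hr
      rcases mul_eq_zero.mp h0 with h' | h'
      · left; exact sub_eq_zero.mp h'
      · right; exact eq_neg_of_add_eq_zero_left h'
    · rintro (rfl | rfl)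
      · exact hr
      · rw [neg_pow]; simp [hr]
  rw [this, Finset.card_insert_of_notMem (by simpa using hrne), Finset.card_singleton]

/-- Atkin: a squarefree `n > 3` with `n ≡ 1 (mod 4)` is prime iff the
number of pairs `(x, y) ∈ ℕ × ℕ` with `n = 4x² + y²` is odd. -/
theorem atkin_one_mod_four (n : ℕ) (hn : 3 < n) (hsf : Squarefree n) (h4 : n % 4 = 1) :
    n.Prime ↔ Odd {p : ℕ × ℕ | n = 4 * p.1 ^ 2 + p.2 ^ 2}.ncard := by
  haveI : NeZero n := ⟨by omega⟩
  have hodd : n % 2 = 1 := by omega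
  classical
  have hbound : ∀ x y : ℕ, n = 4 * x ^ 2 + y ^ 2 → x ≤ n ∧ y ≤ n := by
    intro x y h
    have hx2 : x ≤ x ^ 2 := Nat.le_self_pow (by norm_num) x
    have hy2 : y ≤ y ^ 2 := Nat.le_self_pow (by norm_num) y
    constructor <;> omega
  set Sf : Finset (ℕ × ℕ) :=
    (Finset.range (n+1) ×ˢ Finset.range (n+1)).filter
      (fun p => n = 4 * p.1 ^ 2 + p.2 ^ 2) with hSfdef
  have hset : {p : ℕ × ℕ | n = 4 * p.1 ^ 2 + p.2 ^ 2} = ↑Sf := by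
    ext ⟨x, y⟩
    simp only [Set.mem_setOf_eq, hSfdef, Finset.coe_filter, Finset.mem_product,
      Finset.mem_range, Set.mem_setOf_eq]
    constructor
    · intro h
      exact ⟨⟨by have := (hbound x y h).1; omega, by have := (hbound x y h).2; omega⟩, h⟩
    · exact fun h => h.2
  rw [hset, Set.ncard_coe_finset]
  have hmem : ∀ q : ℕ × ℕ, q ∈ Sf → n = 4 * q.1 ^ 2 + q.2 ^ 2 :=
    fun q hq => (Finset.mem_filter.mp hq).2
  have hq1 : ∀ q ∈ Sf, 1 ≤ q.1 := by
    intro q hq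
    by_contra h
    have hx0 : q.1 = 0 := by omega
    have h' := hmem q hq
    rw [hx0] at h'
    simp at h'
    have : q.2 * q.2 ∣ n := ⟨1, by rw [h']; ring⟩
    have := hsf q.2 this
    rw [Nat.isUnit_iff] at this
    rw [this] at h'
    omega
  have hy_odd : ∀ q ∈ Sf, q.2 % 2 = 1 := by
    intro q hq
    rcases Nat.even_or_odd q.2 with he | ho
    · exfalso
      obtain ⟨k, hk⟩ := he
      have h' := hmem q hq
      have : 2 ∣ n := ⟨2 * q.1 ^ 2 + 2 * k ^ 2, by rw [h', hk]; ring⟩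
      omega
    · exact Nat.odd_iff.mp ho
  have hcop : ∀ q ∈ Sf, Nat.Coprime (2 * q.1) n := by
    intro q hq
    by_contra h
    obtain ⟨r, hr, hrd⟩ := Nat.exists_prime_and_dvd h
    have hr1 : r ∣ 2 * q.1 := hrd.trans (Nat.gcd_dvd_left _ _)
    have hrn : r ∣ n := hrd.trans (Nat.gcd_dvd_right _ _)
    have hr2 : r ≠ 2 := by
      rintro rfl
      obtain ⟨k, hk⟩ := hrn
      omega
    have hrx : r ∣ q.1 := by
      rcases (Nat.Prime.dvd_mul hr).mp hr1 with h' | h'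
      · exact absurd (Nat.le_antisymm (Nat.le_of_dvd two_pos h') hr.two_le) hr2
      · exact h'
    have hry2 : r ∣ q.2 ^ 2 := by
      have h4x : r ∣ 4 * q.1 ^ 2 := by
        obtain ⟨c, hc⟩ := hrx
        exact ⟨4 * c * q.1, by rw [hc]; ring⟩
      have h' := hmem q hq
      exact (Nat.dvd_add_right h4x).mp (h' ▸ hrn)
    have hry : r ∣ q.2 := hr.dvd_of_dvd_pow hry2
    have : r * r ∣ n := by
      obtain ⟨c, hc⟩ := hrx
      obtain ⟨d, hd⟩ := hry
      exact ⟨4 * c ^ 2 + d ^ 2, by rw [hmem q hq, hc, hd]; ring⟩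
    have := hsf r this
    rw [Nat.isUnit_iff] at this
    exact hr.one_lt.ne' this
  set f1 : ℕ × ℕ → ZMod n := fun q => (q.2 : ZMod n) * ((2 * q.1 : ℕ) : ZMod n)⁻¹
    with hf1def
  have hf_unit : ∀ q ∈ Sf,
      ((2 * q.1 : ℕ) : ZMod n) * ((2 * q.1 : ℕ) : ZMod n)⁻¹ = 1 :=
    fun q hq => ZMod.coe_mul_inv_eq_one _ (hcop q hq)
  have hfy : ∀ q ∈ Sf, (q.2 : ZMod n) = f1 q * ((2 * q.1 : ℕ) : ZMod n) := by
    intro q hq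
    have hu := hf_unit q hq
    rw [hf1def]
    linear_combination (-(q.2 : ZMod n)) * hu
  have hfsq : ∀ q ∈ Sf, (f1 q) ^ 2 = -1 := by
    intro q hq
    have hu := hf_unit q hq
    have h0 : ((2 * q.1 : ℕ) : ZMod n) ^ 2 + ((q.2 : ℕ) : ZMod n) ^ 2 = 0 := by
      have h' : ((4 * q.1 ^ 2 + q.2 ^ 2 : ℕ) : ZMod n) = 0 := by
        rw [← hmem q hq]; exact ZMod.natCast_self n
      push_cast at h' ⊢
      linear_combination h'
    rw [hfy q hq] at h0
    set u := ((2 * q.1 : ℕ) : ZMod n)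
    linear_combination (u⁻¹)^2 * h0 - ((f1 q)^2 + 1) * (u * u⁻¹ + 1) * hu
  have hn0z : (0:ℤ) < (n:ℤ) := by exact_mod_cast (by omega : 0 < n)
  have master : ∀ q ∈ Sf, ∀ q' ∈ Sf, ∀ e : ℤ, (e = 1 ∨ e = -1) →
      f1 q' = (e : ZMod n) * f1 q →
      (2 * (q.1:ℤ) = e * (2 * (q'.1:ℤ)) ∧ (q.2:ℤ) = (q'.2:ℤ)) := by
    intro q hq q' hq' e he hs
    have h1 : (2 * (q.1:ℤ)) ^ 2 + ((q.2:ℤ)) ^ 2 = (n:ℤ) := by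
      have h := hmem q hq
      zify at h
      linear_combination -h
    have h2 : (e * (2 * (q'.1:ℤ))) ^ 2 + ((q'.2:ℤ)) ^ 2 = (n:ℤ) := by
      have h := hmem q' hq'
      zify at h
      rcases he with rfl | rfl <;> linear_combination -h
    have hb : (q.2:ℤ) % 2 = 1 := by have := hy_odd q hq; omega
    have hb' : (q'.2:ℤ) % 2 = 1 := by have := hy_odd q' hq'; omega
    have hbp : (0:ℤ) < q.2 := by have := hy_odd q hq; omega
    have hbp' : (0:ℤ) < q'.2 := by have := hy_odd q' hq'; omega
    have hy := hfy q hq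
    have hy' := hfy q' hq'
    have hsq := hfsq q hq
    push_cast at hy hy'
    have d1 : (n:ℤ) ∣ (2 * (q.1:ℤ)) * (q'.2:ℤ) - (e * (2 * (q'.1:ℤ))) * (q.2:ℤ) := by
      rw [← ZMod.intCast_zmod_eq_zero_iff_dvd]
      push_cast
      linear_combination (2 * (q.1 : ZMod n)) * hy' - (e : ZMod n) * (2 * (q'.1 : ZMod n)) * hy
        + (2 * (q.1 : ZMod n)) * (2 * (q'.1 : ZMod n)) * hs
    have d2 : (n:ℤ) ∣ (2 * (q.1:ℤ)) * (e * (2 * (q'.1:ℤ))) + (q.2:ℤ) * (q'.2:ℤ) := by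
      rw [← ZMod.intCast_zmod_eq_zero_iff_dvd]
      push_cast
      linear_combination (q'.2 : ZMod n) * hy + (f1 q) * (2 * (q.1 : ZMod n)) * hy'
        + (f1 q) * (2 * (q.1 : ZMod n)) * (2 * (q'.1 : ZMod n)) * hs
        + (e : ZMod n) * (2 * (q.1 : ZMod n)) * (2 * (q'.1 : ZMod n)) * hsq
    exact rep_inj hn0z h1 h2 (by omega) (by rcases he with rfl | rfl <;> omega) hb hb'
      hbp hbp' d1 d2
  have hinj : Set.InjOn f1 ↑Sf := by
    intro q hq q' hq' heq
    simp only [Finset.mem_coe] at hq hq'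
    have hm := master q hq q' hq' 1 (Or.inl rfl) (by rw [heq]; push_cast; ring)
    have e1 : q.1 = q'.1 := by omega
    have e2 : q.2 = q'.2 := by omega
    exact Prod.ext e1 e2
  have hdisj : Disjoint (Sf.image f1) (Sf.image (fun q => - f1 q)) := by
    rw [Finset.disjoint_left]
    rintro s hs1 hs2
    obtain ⟨q, hq, rfl⟩ := Finset.mem_image.mp hs1
    obtain ⟨q', hq', heq⟩ := Finset.mem_image.mp hs2
    have hm := master q hq q' hq' (-1) (Or.inr rfl) (by push_cast; linear_combination -heq)
    have := hq1 q hq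
    have := hq1 q' hq'
    omega
  have hcover : Finset.univ.filter (fun s : ZMod n => s ^ 2 = -1)
      = Sf.image f1 ∪ Sf.image (fun q => - f1 q) := by
    ext s
    simp only [Finset.mem_filter, Finset.mem_univ, true_and, Finset.mem_union,
      Finset.mem_image]
    constructor
    · intro hs
      have hsv0 : ((s.val : ℕ) : ZMod n) = s := ZMod.natCast_rightInverse s
      have hsv : (n:ℤ) ∣ ((s.val : ℤ)) ^ 2 + 1 := by
        rw [← ZMod.intCast_zmod_eq_zero_iff_dvd]
        push_cast
        rw [hsv0, hs]
        ring
      obtain ⟨a, b, hab, hd, hae, hbo, hbp⟩ := exists_rep n hsf hodd (s.val : ℤ) hsv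
      have ha0 : a ≠ 0 := by
        rintro rfl
        have hb2 : (n:ℤ) = b ^ 2 := by linear_combination -hab
        have hnb : n = b.toNat * b.toNat := by
          have : ((b.toNat * b.toNat : ℕ) : ℤ) = (n:ℤ) := by
            push_cast [Int.toNat_of_nonneg hbp.le]
            linear_combination -hb2
          exact_mod_cast this.symm
        have := hsf b.toNat ⟨1, by rw [hnb]; ring⟩
        rw [Nat.isUnit_iff] at this
        rw [this] at hnb
        omega
      set x : ℕ := a.natAbs / 2 with hxdef
      set y : ℕ := b.toNat with hydef
      have hax : (a.natAbs : ℤ) = 2 * (x:ℤ) := by omega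
      have hby : (y : ℤ) = b := Int.toNat_of_nonneg hbp.le
      have habs : a = (a.natAbs:ℤ) ∨ a = -(a.natAbs:ℤ) := Int.natAbs_eq a
      have hmemq : (x, y) ∈ Sf := by
        have ha2 : a ^ 2 = 4 * (x:ℤ) ^ 2 := by
          rcases habs with h' | h' <;> rw [h', hax] <;> ring
        have heq : n = 4 * x ^ 2 + y ^ 2 := by
          have : ((4 * x ^ 2 + y ^ 2 : ℕ) : ℤ) = (n:ℤ) := by
            push_cast
            rw [hby]
            linear_combination hab - ha2
          exact_mod_cast this.symm
        rw [hSfdef]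
        refine Finset.mem_filter.mpr ⟨Finset.mem_product.mpr ⟨?_, ?_⟩, heq⟩
        · simp only [Finset.mem_range]; have := (hbound x y heq).1; omega
        · simp only [Finset.mem_range]; have := (hbound x y heq).2; omega
      rcases ha0.lt_or_gt with ha | ha
      · right
        refine ⟨(x,y), hmemq, ?_⟩
        have haa : a = -(2*(x:ℤ)) := by omega
        have hd' : (n:ℤ) ∣ (y:ℤ) - (s.val:ℤ) * (-(2*(x:ℤ))) := by rw [hby, ← haa]; exact hd
        have hz := (ZMod.intCast_zmod_eq_zero_iff_dvd _ n).mpr hd'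
        push_cast at hz
        rw [hsv0] at hz
        have hu := hf_unit (x,y) hmemq
        have hyy := hfy (x,y) hmemq
        push_cast at hu hyy
        linear_combination ((2*(x:ZMod n))⁻¹) * hyy - ((2*(x:ZMod n))⁻¹) * hz
          + (f1 (x,y) + s) * hu
      · left
        refine ⟨(x,y), hmemq, ?_⟩
        have haa : a = 2*(x:ℤ) := by omega
        have hd' : (n:ℤ) ∣ (y:ℤ) - (s.val:ℤ) * (2*(x:ℤ)) := by rw [hby, ← haa]; exact hd
        have hz := (ZMod.intCast_zmod_eq_zero_iff_dvd _ n).mpr hd'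
        push_cast at hz
        rw [hsv0] at hz
        have hu := hf_unit (x,y) hmemq
        have hyy := hfy (x,y) hmemq
        push_cast at hu hyy
        linear_combination (-(2*(x:ZMod n))⁻¹) * hyy + ((2*(x:ZMod n))⁻¹) * hz
          - (f1 (x,y) - s) * hu
    · rintro (⟨q, hq, rfl⟩ | ⟨q, hq, rfl⟩)
      · exact hfsq q hq
      · rw [neg_pow]
        simp [hfsq q hq]
  have hcount : (Finset.univ.filter (fun s : ZMod n => s ^ 2 = -1)).card = 2 * Sf.card := by
    rw [hcover, Finset.card_union_of_disjoint hdisj, Finset.card_image_of_injOn hinj,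
      Finset.card_image_of_injOn (fun q hq q' hq' h => hinj hq hq' (neg_injective h))]
    ring
  constructor
  · intro hp
    haveI : Fact n.Prime := ⟨hp⟩
    have hex : ∃ r : ZMod n, r ^ 2 = -1 := by
      obtain ⟨r, hr⟩ := ZMod.exists_sq_eq_neg_one_iff.mpr (by omega : n % 4 ≠ 3)
      exact ⟨r, by rw [sq]; exact hr.symm⟩
    have h2 := card_roots_prime hp (by omega) hex
    rw [hcount] at h2
    have htest : (2:ℕ) * Sf.card = 2 * 1 := by rw [h2]
    have hone : Sf.card = 1 := Nat.eq_of_mul_eq_mul_left two_pos htest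
    rw [hone]
    exact odd_one
  · intro hoddcard
    by_contra hnp
    have heven : Even Sf.card := by
      by_cases hR : (Finset.univ.filter (fun s : ZMod n => s ^ 2 = -1)) = ∅
      · rw [hR] at hcount
        simp only [Finset.card_empty] at hcount
        rcases Nat.mul_eq_zero.mp hcount.symm with h | h
        · omega
        · rw [h]; exact Even.zero
      · obtain ⟨s₀, hs₀⟩ := Finset.nonempty_iff_ne_empty.mpr hR
        have hs₀' : s₀ ^ 2 = -1 := (Finset.mem_filter.mp hs₀).2
        have hp : n.minFac.Prime := Nat.minFac_prime (by omega)
        obtain ⟨m, hm⟩ : n.minFac ∣ n := n.minFac_dvd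
        set p := n.minFac with hpdef
        have hm1 : m ≠ 1 := by
          rintro rfl
          rw [mul_one] at hm
          exact hnp (hm ▸ hp)
        have hm0 : m ≠ 0 := by rintro rfl; rw [hm] at hn; omega
        have hmodd : m % 2 = 1 := by
          rcases Nat.even_or_odd m with he | ho
          · exfalso; obtain ⟨k, hk⟩ := he
            have : 2 ∣ n := ⟨p * k, by rw [hm, hk]; ring⟩
            omega
          · exact Nat.odd_iff.mp ho
        have hpodd : p % 2 = 1 := by
          rcases Nat.even_or_odd p with he | ho
          · exfalso; obtain ⟨k, hk⟩ := he
            have : 2 ∣ n := ⟨k * m, by rw [hm, hk]; ring⟩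
            omega
          · exact Nat.odd_iff.mp ho
        have hpm : p.Coprime m := by
          rw [Nat.Prime.coprime_iff_not_dvd hp]
          intro hdm
          have : p * p ∣ n := by rw [hm]; exact mul_dvd_mul_left p hdm
          have := hsf p this
          rw [Nat.isUnit_iff] at this
          exact hp.one_lt.ne' this
        haveI : NeZero p := ⟨hp.pos.ne'⟩
        haveI : NeZero m := ⟨hm0⟩
        have E : ZMod n ≃+* ZMod p × ZMod m :=
          (ZMod.ringEquivCongr hm).trans (ZMod.chineseRemainder hpm)
        have hEsq : ∀ t : ZMod n, t ^ 2 = -1 → ((E t).1 ^ 2 = -1 ∧ (E t).2 ^ 2 = -1) := by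
          intro t ht
          have : (E t) ^ 2 = -1 := by
            rw [← map_pow, ht, map_neg, map_one]
          constructor
          · have h1 : ((E t) ^ 2).1 = (-1 : ZMod p × ZMod m).1 := by rw [this]
            simpa using h1
          · have h1 : ((E t) ^ 2).2 = (-1 : ZMod p × ZMod m).2 := by rw [this]
            simpa using h1
        have hcard2 : (Finset.univ.filter (fun s : ZMod n => s ^ 2 = -1)).card =
            ((Finset.univ.filter (fun s : ZMod p => s ^ 2 = -1)) ×ˢ
             (Finset.univ.filter (fun s : ZMod m => s ^ 2 = -1))).card := by
          apply Finset.card_bij (fun t _ => E t)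
          · intro t ht
            rw [Finset.mem_filter] at ht
            obtain ⟨h1, h2⟩ := hEsq t ht.2
            rw [Finset.mem_product, Finset.mem_filter, Finset.mem_filter]
            exact ⟨⟨Finset.mem_univ _, h1⟩, Finset.mem_univ _, h2⟩
          · intro t ht t' ht' h
            exact E.injective h
          · intro t ht
            refine ⟨E.symm t, ?_, by simp⟩
            rw [Finset.mem_product, Finset.mem_filter, Finset.mem_filter] at ht
            rw [Finset.mem_filter]
            refine ⟨Finset.mem_univ _, ?_⟩
            apply E.injective
            rw [map_pow, map_neg, map_one, RingEquiv.apply_symm_apply]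
            have : t ^ 2 = (t.1 ^ 2, t.2 ^ 2) := rfl
            rw [this, ht.1.2, ht.2.2]
            rfl
        have hcardp : (Finset.univ.filter (fun s : ZMod p => s ^ 2 = -1)).card = 2 := by
          apply card_roots_prime hp (by omega)
          exact ⟨(E s₀).1, (hEsq s₀ hs₀').1⟩
        have hcardm : Even (Finset.univ.filter (fun s : ZMod m => s ^ 2 = -1)).card := by
          apply even_card_of_invol (fun t => -t)
          intro a ha
          rw [Finset.mem_filter] at ha ⊢
          refine ⟨⟨Finset.mem_univ _, by rw [neg_pow]; simp [ha.2]⟩, neg_neg a, ?_⟩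
          intro hfix
          have h2a : a + a = 0 := by linear_combination -hfix
          have hz : ((2:ℕ) : ZMod m) = 0 := by
            push_cast
            linear_combination -a * h2a + 2 * ha.2
          rw [ZMod.natCast_eq_zero_iff] at hz
          have := Nat.le_of_dvd two_pos hz
          omega
        rw [hcard2, Finset.card_product, hcardp] at hcount
        have hSm : Sf.card = (Finset.univ.filter (fun s : ZMod m => s ^ 2 = -1)).card :=
          (Nat.eq_of_mul_eq_mul_left two_pos hcount).symm
        rw [hSm]
        exact hcardm
    rw [← Nat.not_odd_iff_even] at heven
    exact heven hoddcard
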